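/- Linearization of the A_m⁽¹⁾ mutation recurrence: let x₁, …, x_{m+1} be an A_m⁽¹⁾ X-variable sequence, t : ℤ → F a sequence of nonzero elements, and A : ℤ → F a sequence of nonzero elements satisfying A(j+m+1)·A(j)·t(j) = A(j+1)·A(j+m)·(1 + x₁(j)) for all j ∈ ℤ. Let γ : ℤ → F satisfy γ(0) = 1 and γ(j+1)·t(j) = γ(j) for all j ∈ ℤ, and put r(j) := A(j+m)/(γ(j)·A(j)), β₀ := A(m)/A(0), K₁ := 1 + x₁(0)·(1 + x₂(0)·(1 + ⋯ x_m(0)·(1 + x_{m+1}(0))⋯)), and K₂ := r(1−m)·x₁(0)·N(0)/β₀. Then for all j ∈ ℤ: γ(j)⁻¹·γ(j+m)⁻¹·A(j+2m) − β₀·K₁·γ(j)⁻¹·A(j+m) + β₀²·K₂·A(j) = 0. -/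

import Mathlib

/-- The nested expression `x_{m+1-k}(j)·(1 + x_{m+2-k}(j)·(1 + ⋯ x_m(j)·(1 + x_{m+1}(j))⋯))`
built from the X-variables `x i j`; `nestAux x m j (m-1)` is the expression
`N(j) = x₂(j)·(1 + x₃(j)·(1 + ⋯ x_m(j)·(1 + x_{m+1}(j))⋯))`. -/
def nestAux {F : Type*} [Field F] (x : ℕ → ℤ → F) (m : ℕ) (j : ℤ) : ℕ → F
  | 0 => x (m + 1) j
  | k + 1 => x (m - k) j * (1 + nestAux x m j k)

/-- Linearization of the `A_m⁽¹⁾` mutation recurrence. -/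
theorem am1_linearization {F : Type*} [Field F] (m : ℕ) (hm : 2 ≤ m)
    (x : ℕ → ℤ → F)
    (hx₁ : ∀ j : ℤ, x 1 j ≠ 0) (hx₁' : ∀ j : ℤ, 1 + x 1 j ≠ 0)
    (hmutA : ∀ j : ℤ, x 1 (j + 1) * (1 + x 1 j) = x 2 j * x 1 j)
    (hmutB : ∀ j : ℤ, x m (j + 1) * (1 + x 1 j) = x (m + 1) j * x 1 j)
    (hmutC : ∀ j : ℤ, x (m + 1) (j + 1) * x 1 j = 1)
    (hmutD : ∀ j : ℤ, ∀ i : ℕ, 2 ≤ i → i ≤ m - 1 → x i (j + 1) = x (i + 1) j)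
    (t : ℤ → F) (ht : ∀ j : ℤ, t j ≠ 0)
    (A : ℤ → F) (hA : ∀ j : ℤ, A j ≠ 0)
    (hArec : ∀ j : ℤ, A (j + m + 1) * A j * t j = A (j + 1) * A (j + m) * (1 + x 1 j))
    (γ : ℤ → F) (hγ0 : γ 0 = 1) (hγ : ∀ j : ℤ, γ (j + 1) * t j = γ j)
    (r : ℤ → F) (hrdef : ∀ j : ℤ, r j = A (j + m) / (γ j * A j))
    (β₀ K₁ K₂ : F) (hβ₀ : β₀ = A m / A 0)
    (hK₁ : K₁ = 1 + x 1 0 * (1 + nestAux x m 0 (m - 1)))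
    (hK₂ : K₂ = r (1 - m) * x 1 0 * nestAux x m 0 (m - 1) / β₀) :
    ∀ j : ℤ, (γ j)⁻¹ * (γ (j + m))⁻¹ * A (j + 2 * m)
        - β₀ * K₁ * (γ j)⁻¹ * A (j + m) + β₀ ^ 2 * K₂ * A j = 0 := by
  -- γ is everywhere nonzero
  have hγne : ∀ j : ℤ, γ j ≠ 0 := by
    intro j
    induction j using Int.induction_on with
    | zero => rw [hγ0]; exact one_ne_zero
    | succ i ih =>
      intro h
      apply ih
      rw [← hγ (i : ℤ), h, zero_mul]
    | pred i ih =>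
      have h := hγ (-(i : ℤ) - 1)
      rw [show -(i : ℤ) - 1 + 1 = -(i : ℤ) from by ring] at h
      rw [← h]
      exact mul_ne_zero ih (ht _)
  have hrne : ∀ j : ℤ, r j ≠ 0 := by
    intro j
    rw [hrdef j]
    exact div_ne_zero (hA _) (mul_ne_zero (hγne j) (hA j))
  have hβne : β₀ ≠ 0 := by
    rw [hβ₀]; exact div_ne_zero (hA _) (hA _)
  have hr0 : r 0 = β₀ := by
    rw [hrdef 0, hβ₀, hγ0, one_mul, zero_add]
  -- the basic recursion for r
  have hrrec : ∀ j : ℤ, r (j + 1) = r j * (1 + x 1 j) := by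
    intro j
    have ha := hArec j
    have hg := hγ j
    rw [hrdef (j + 1), hrdef j, show j + 1 + (m : ℤ) = j + (m : ℤ) + 1 from by ring]
    field_simp [hγne (j + 1), hγne j, hA (j + 1), hA j]
    linear_combination γ (j + 1) * ha - A (j + (m : ℤ) + 1) * A j * hg
  -- shift lemma for middle x-variables
  have hshift : ∀ (k a : ℕ), 2 ≤ a → a + k ≤ m → ∀ j : ℤ, x a (j + (k : ℤ)) = x (a + k) j := by
    intro k
    induction k with
    | zero => intro a _ _ j; norm_num
    | succ k ih =>
      intro a ha hak j
      rw [show (j + ((k + 1 : ℕ) : ℤ)) = (j + 1) + (k : ℤ) from by push_cast; ring]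
      rw [ih a ha (by omega) (j + 1)]
      exact hmutD j (a + k) (by omega) (by omega)
  -- the combined shift: x₂(j+m)(1+x₁(j+1)) = x_{m+1}(j+1)x₁(j+1)
  have hshiftB : ∀ j : ℤ, x 2 (j + m) * (1 + x 1 (j + 1)) = x (m + 1) (j + 1) * x 1 (j + 1) := by
    intro j
    have h := hshift (m - 2) 2 le_rfl (by omega) (j + 2)
    rw [show 2 + (m - 2) = m from by omega] at h
    rw [show j + (m : ℤ) = (j + 2) + ((m - 2 : ℕ) : ℤ) from by omega]
    rw [h, show j + 2 = (j + 1) + 1 from by ring]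
    exact hmutB (j + 1)
  -- the nest lemma: nestAux x m 0 k = x_{m+1}(-k)
  have hnest : ∀ k : ℕ, k ≤ m - 1 → nestAux x m 0 k = x (m + 1) (-(k : ℤ)) := by
    intro k
    induction k with
    | zero => intro _; simp only [nestAux]; norm_num
    | succ k ih =>
      intro hk
      have ihk := ih (by omega)
      simp only [nestAux]
      rw [ihk]
      have hxm : x (m - k) 0 = x m (-(k : ℤ)) := by
        have h := hshift k (m - k) (by omega) (by omega) (-(k : ℤ))
        rw [show m - k + k = m from by omega] at h
        rw [show (0 : ℤ) = -(k : ℤ) + (k : ℤ) from by ring]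
        exact h
      have hC := hmutC (-(k : ℤ) - 1)
      rw [show -(k : ℤ) - 1 + 1 = -(k : ℤ) from by ring] at hC
      have hB := hmutB (-(k : ℤ) - 1)
      rw [show -(k : ℤ) - 1 + 1 = -(k : ℤ) from by ring] at hB
      have hne := hx₁ (-(k : ℤ) - 1)
      rw [show (-((k + 1 : ℕ) : ℤ)) = -(k : ℤ) - 1 from by push_cast; ring]
      rw [hxm]
      apply mul_right_cancel₀ hne
      linear_combination hB + x m (-(k : ℤ)) * hC
  have hN : nestAux x m 0 (m - 1) * x 1 (-(m : ℤ)) = 1 := by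
    rw [hnest (m - 1) le_rfl]
    have h := hmutC (-(m : ℤ))
    rw [show -(m : ℤ) + 1 = -((m - 1 : ℕ) : ℤ) from by omega] at h
    exact h
  -- the one-step invariance identity
  have hstep : ∀ j : ℤ, r (j + m + 1) * r (j + 2) * x 1 (j + m + 1) * x 1 j
      = r (j + m) * r (j + 1) * x 1 (j + m) * x 1 (j + 1) := by
    intro j
    have e1 : r (j + m + 1) = r (j + m) * (1 + x 1 (j + m)) := hrrec (j + m)
    have e2 : r (j + 2) = r (j + 1) * (1 + x 1 (j + 1)) := by
      have h := hrrec (j + 1)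
      rwa [show j + 1 + 1 = j + 2 from by ring] at h
    have e3 := hmutA (j + m)
    have e4 := hshiftB j
    have e5 := hmutC j
    linear_combination (r (j + 2) * x 1 (j + m + 1) * x 1 j) * e1
      + (r (j + m) * (1 + x 1 (j + m)) * x 1 (j + m + 1) * x 1 j) * e2
      + (r (j + m) * r (j + 1) * (1 + x 1 (j + 1)) * x 1 j) * e3
      + (r (j + m) * r (j + 1) * x 1 (j + m) * x 1 j) * e4
      + (r (j + m) * r (j + 1) * x 1 (j + m) * x 1 (j + 1)) * e5
  -- the invariant equals β₀²K₂ everywhere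
  have hfwd : ∀ j : ℤ, r (j + m) * r (j + 1) * x 1 (j + m) = β₀ ^ 2 * K₂ * x 1 j →
      r ((j + 1) + m) * r ((j + 1) + 1) * x 1 ((j + 1) + m) = β₀ ^ 2 * K₂ * x 1 (j + 1) := by
    intro j h
    rw [show j + 1 + (m : ℤ) = j + (m : ℤ) + 1 from by ring, show j + 1 + 1 = j + 2 from by ring]
    apply mul_right_cancel₀ (hx₁ j)
    linear_combination hstep j + x 1 (j + 1) * h
  have hbwd : ∀ j : ℤ, r ((j + 1) + m) * r ((j + 1) + 1) * x 1 ((j + 1) + m) = β₀ ^ 2 * K₂ * x 1 (j + 1) →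
      r (j + m) * r (j + 1) * x 1 (j + m) = β₀ ^ 2 * K₂ * x 1 j := by
    intro j h
    rw [show j + 1 + (m : ℤ) = j + (m : ℤ) + 1 from by ring, show j + 1 + 1 = j + 2 from by ring] at h
    apply mul_right_cancel₀ (hx₁ (j + 1))
    linear_combination - hstep j + x 1 j * h
  have hgval : ∀ j : ℤ, r (j + m) * r (j + 1) * x 1 (j + m) = β₀ ^ 2 * K₂ * x 1 j := by
    have base : r (-(m : ℤ) + m) * r (-(m : ℤ) + 1) * x 1 (-(m : ℤ) + m)
        = β₀ ^ 2 * K₂ * x 1 (-(m : ℤ)) := by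
      rw [show -(m : ℤ) + (m : ℤ) = 0 from by ring,
        show -(m : ℤ) + 1 = 1 - (m : ℤ) from by ring, hr0, hK₂]
      field_simp
      linear_combination (-(r (1 - (m : ℤ)) * x 1 0)) * hN
    have key : ∀ i : ℤ, r ((-(m : ℤ) + i) + m) * r ((-(m : ℤ) + i) + 1) * x 1 ((-(m : ℤ) + i) + m)
        = β₀ ^ 2 * K₂ * x 1 (-(m : ℤ) + i) := by
      intro i
      induction i using Int.induction_on with
      | zero => rw [show -(m : ℤ) + 0 = -(m : ℤ) from by ring]; exact base
      | succ i ih =>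
        rw [show -(m : ℤ) + ((i : ℤ) + 1) = (-(m : ℤ) + (i : ℤ)) + 1 from by ring]
        exact hfwd _ ih
      | pred i ih =>
        apply hbwd
        rw [show (-(m : ℤ) + (-(i : ℤ) - 1)) + 1 = -(m : ℤ) + -(i : ℤ) from by ring]
        exact ih
    intro j
    have h := key (j + m)
    rwa [show -(m : ℤ) + (j + (m : ℤ)) = j from by ring] at h
  -- the linearized quantity T
  have hTfwd : ∀ j : ℤ, r (j + m) * r j - β₀ * K₁ * r j + β₀ ^ 2 * K₂ = 0 →
      r ((j + 1) + m) * r (j + 1) - β₀ * K₁ * r (j + 1) + β₀ ^ 2 * K₂ = 0 := by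
    intro j h
    rw [show j + 1 + (m : ℤ) = j + (m : ℤ) + 1 from by ring]
    have e1 : r (j + m + 1) = r (j + m) * (1 + x 1 (j + m)) := hrrec (j + m)
    have e0 : r (j + 1) = r j * (1 + x 1 j) := hrrec j
    have hg := hgval j
    rw [e0] at hg
    rw [e1, e0]
    linear_combination (1 + x 1 j) * h + hg
  have hTbwd : ∀ j : ℤ, r ((j + 1) + m) * r (j + 1) - β₀ * K₁ * r (j + 1) + β₀ ^ 2 * K₂ = 0 →
      r (j + m) * r j - β₀ * K₁ * r j + β₀ ^ 2 * K₂ = 0 := by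
    intro j h
    rw [show j + 1 + (m : ℤ) = j + (m : ℤ) + 1 from by ring] at h
    have e1 : r (j + m + 1) = r (j + m) * (1 + x 1 (j + m)) := hrrec (j + m)
    have e0 : r (j + 1) = r j * (1 + x 1 j) := hrrec j
    have hg := hgval j
    rw [e0] at hg
    rw [e1, e0] at h
    have h2 : (1 + x 1 j) * (r (j + m) * r j - β₀ * K₁ * r j + β₀ ^ 2 * K₂) = 0 := by
      linear_combination h - hg
    exact (mul_eq_zero.mp h2).resolve_left (hx₁' j)
  have hT : ∀ j : ℤ, r (j + m) * r j - β₀ * K₁ * r j + β₀ ^ 2 * K₂ = 0 := by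
    have hanchor : r ((1 - (m : ℤ)) + m) * r (1 - (m : ℤ)) - β₀ * K₁ * r (1 - (m : ℤ))
        + β₀ ^ 2 * K₂ = 0 := by
      rw [show (1 - (m : ℤ)) + (m : ℤ) = 1 from by ring]
      have hr1 : r 1 = β₀ * (1 + x 1 0) := by
        have h := hrrec 0
        rw [zero_add, hr0] at h
        exact h
      rw [hr1, hK₁, hK₂]
      field_simp
      ring
    have key : ∀ i : ℤ, r ((1 - (m : ℤ) + i) + m) * r (1 - (m : ℤ) + i)
        - β₀ * K₁ * r (1 - (m : ℤ) + i) + β₀ ^ 2 * K₂ = 0 := by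
      intro i
      induction i using Int.induction_on with
      | zero => rw [show 1 - (m : ℤ) + 0 = 1 - (m : ℤ) from by ring]; exact hanchor
      | succ i ih =>
        rw [show 1 - (m : ℤ) + ((i : ℤ) + 1) = (1 - (m : ℤ) + (i : ℤ)) + 1 from by ring]
        exact hTfwd _ ih
      | pred i ih =>
        apply hTbwd
        rw [show (1 - (m : ℤ) + (-(i : ℤ) - 1)) + 1 = 1 - (m : ℤ) + -(i : ℤ) from by ring]
        exact ih
    intro j
    have h := key (j - (1 - (m : ℤ)))
    rwa [show 1 - (m : ℤ) + (j - (1 - (m : ℤ))) = j from by ring] at h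
  -- final assembly
  intro j
  have hTj := hT j
  have hAm : r j * (γ j * A j) = A (j + m) := by
    rw [hrdef j]
    exact div_mul_cancel₀ _ (mul_ne_zero (hγne j) (hA j))
  have hA2m : r (j + m) * (γ (j + m) * A (j + m)) = A (j + 2 * m) := by
    have h := hrdef (j + m)
    rw [show j + (m : ℤ) + (m : ℤ) = j + 2 * (m : ℤ) from by ring] at h
    rw [h]
    exact div_mul_cancel₀ _ (mul_ne_zero (hγne (j + m)) (hA (j + m)))
  rw [← hA2m, ← hAm]
  field_simp [hγne j, hγne (j + (m : ℤ))]
  linear_combination (A j) * hTj
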